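/- arXiv:1706.01353 — 2 statements merged into one kernel-verified Lean document; each statement's English description precedes it below -/
import Mathlib

section
/- Let d ≥ 2, C > 0, ν ∈ (0,1], and 0 < δ ≤ 1. Then there exists a constant C' depending only on d and C such that ∫_{|x|≤δ} ∫_{|y|≤δ} dx dy / ((x·y)² + (Cν)²) ≤ C' δ^{2d-2} / ν, where x, y ∈ ℝ^d. -/
open MeasureTheory Real Set


lemma aux_one_dim (a b δ : ℝ) (ha : 0 < a) (hb : 0 < b) :
    (∫ t in Icc (-δ) δ, 1 / ((b * t) ^ 2 + a ^ 2)) ≤ π / (a * b) := by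
  set g : ℝ → ℝ := fun s => a⁻¹ * a⁻¹ * (1 + s ^ 2)⁻¹ with hg
  have hcomp : (fun t : ℝ => 1 / ((b * t) ^ 2 + a ^ 2)) = fun t => g ((b / a) * t) := by
    funext t
    simp only [hg]
    rw [div_mul_eq_mul_div, div_pow, one_div]
    rw [eq_comm, mul_assoc, ← mul_inv, ← mul_inv]
    congr 1
    field_simp
    ring
  have hgint : Integrable g := integrable_inv_one_add_sq.const_mul _
  have hFint : Integrable (fun t : ℝ => 1 / ((b * t) ^ 2 + a ^ 2)) := by
    rw [hcomp]; exact hgint.comp_mul_left' (by positivity)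
  have hnn : 0 ≤ᵐ[volume] fun t : ℝ => 1 / ((b * t) ^ 2 + a ^ 2) :=
    Filter.Eventually.of_forall fun t => by positivity
  refine (setIntegral_le_integral hFint hnn).trans_eq ?_
  rw [hcomp, MeasureTheory.Measure.integral_comp_mul_left g (b / a)]
  have h2 : ∫ s : ℝ, g s = a⁻¹ * a⁻¹ * π := by
    rw [hg]; rw [MeasureTheory.integral_const_mul, integral_univ_inv_one_add_sq]
  rw [h2, smul_eq_mul, abs_of_pos (by positivity : (0:ℝ) < (b / a)⁻¹)]
  field_simp

lemma aux_box_indicator {d : ℕ} (i0 : Fin d) (F : ℝ → ℝ) (δ : ℝ) :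
    ∀ z : Fin d → ℝ, (Set.pi univ fun _ : Fin d => Icc (-δ) δ).indicator (fun z => F (z i0)) z =
      ∏ i, (if i = i0 then (Icc (-δ) δ).indicator F (z i) else
        (Icc (-δ) δ).indicator (fun _ => (1:ℝ)) (z i)) := by
  intro z
  by_cases h : ∀ i, z i ∈ Icc (-δ) δ
  · rw [indicator_of_mem (Set.mem_univ_pi.2 h)]
    have : ∀ i, (if i = i0 then (Icc (-δ) δ).indicator F (z i) else
        (Icc (-δ) δ).indicator (fun _ => (1:ℝ)) (z i)) = if i = i0 then F (z i) else 1 := by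
      intro i
      by_cases hi : i = i0 <;> simp [hi, indicator_of_mem (h _)]
    rw [Finset.prod_congr rfl fun i _ => this i, Finset.prod_ite_eq' Finset.univ i0 (fun i => F (z i))]
    simp
  · push_neg at h
    obtain ⟨j, hj⟩ := h
    rw [indicator_of_notMem (fun hmem => hj (Set.mem_univ_pi.1 hmem j))]
    refine (Finset.prod_eq_zero (Finset.mem_univ j) ?_).symm
    by_cases hji : j = i0
    · subst hji; rw [if_pos rfl]; exact indicator_of_notMem hj F
    · rw [if_neg hji]; exact indicator_of_notMem hj _

lemma aux_box_integrable {d : ℕ} (i0 : Fin d) (F : ℝ → ℝ) (δ : ℝ) (hFc : Continuous F) :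
    IntegrableOn (fun z : Fin d → ℝ => F (z i0)) (Set.pi univ fun _ => Icc (-δ) δ) := by
  rw [← integrable_indicator_iff (MeasurableSet.univ_pi fun _ => measurableSet_Icc)]
  have := aux_box_indicator i0 F δ
  rw [show (Set.pi univ fun _ : Fin d => Icc (-δ) δ).indicator (fun z => F (z i0)) =
    fun z => ∏ i, (if i = i0 then (Icc (-δ) δ).indicator F (z i) else
      (Icc (-δ) δ).indicator (fun _ => (1:ℝ)) (z i)) from funext this]
  exact Integrable.fintype_prod (f := fun i t => if i = i0 then (Icc (-δ) δ).indicator F t else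
      (Icc (-δ) δ).indicator (fun _ => (1:ℝ)) t) (fun i => by
    by_cases hi : i = i0 <;>
      simp only [hi, if_true, if_false, reduceIte] <;>
      rw [integrable_indicator_iff measurableSet_Icc]
    · exact hFc.integrableOn_Icc
    · exact integrableOn_const measure_Icc_lt_top.ne)

lemma aux_box (d : ℕ) (i0 : Fin d) (F : ℝ → ℝ) (δ : ℝ) :
    ∫ z in Set.pi univ (fun _ : Fin d => Icc (-δ) δ), F (z i0) =
      (∫ t in Icc (-δ) δ, F t) * ((volume (Icc (-δ) δ)).toReal) ^ (d - 1) := by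
  rw [← integral_indicator (MeasurableSet.univ_pi fun _ => measurableSet_Icc)]
  rw [show (Set.pi univ fun _ : Fin d => Icc (-δ) δ).indicator (fun z => F (z i0)) =
    fun z => ∏ i, (if i = i0 then (Icc (-δ) δ).indicator F (z i) else
      (Icc (-δ) δ).indicator (fun _ => (1:ℝ)) (z i)) from funext (aux_box_indicator i0 F δ)]
  beta_reduce
  rw [volume_pi]
  rw [MeasureTheory.integral_fintype_prod_eq_prod
    (f := fun i t => if i = i0 then (Icc (-δ) δ).indicator F t else
      (Icc (-δ) δ).indicator (fun _ => (1:ℝ)) t)]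
  rw [← Finset.mul_prod_erase Finset.univ _ (Finset.mem_univ i0)]
  simp only [if_true, reduceIte]
  rw [integral_indicator measurableSet_Icc]
  congr 1
  have : ∀ i ∈ Finset.univ.erase i0, (∫ t : ℝ, if i = i0 then (Icc (-δ) δ).indicator F t else
      (Icc (-δ) δ).indicator (fun _ => (1:ℝ)) t) = (volume (Icc (-δ) δ)).toReal := by
    intro i hi
    simp only [if_neg (Finset.ne_of_mem_erase hi)]
    rw [integral_indicator measurableSet_Icc]
    simp [ENNReal.toReal_ofReal']
  rw [Finset.prod_congr rfl this, Finset.prod_const, Finset.card_erase_of_mem (Finset.mem_univ _),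
    Finset.card_univ, Fintype.card_fin]

lemma aux_inv_norm_integrable (d : ℕ) (hd : 2 ≤ d) (δ : ℝ) (hδ : 0 < δ) :
    IntegrableOn (fun x : EuclideanSpace ℝ (Fin d) => ‖x‖⁻¹) (Metric.closedBall 0 δ) := by
  have hE : Module.finrank ℝ (EuclideanSpace ℝ (Fin d)) = d := by
    simp [finrank_euclideanSpace]
  haveI : Nontrivial (EuclideanSpace ℝ (Fin d)) := nontrivial_of_ne (EuclideanSpace.single ⟨0, by omega⟩ (1:ℝ)) 0 (by
    intro h
    have h1 := congrArg norm h
    rw [EuclideanSpace.norm_single, norm_zero, norm_one] at h1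
    exact one_ne_zero h1)
  refine ⟨(measurable_norm.inv).aestronglyMeasurable, ?_⟩
  rw [hasFiniteIntegral_iff_norm]
  set S : ℕ → Set (EuclideanSpace ℝ (Fin d)) := fun n => Metric.closedBall 0 (δ/2^n) \ Metric.closedBall 0 (δ/2^(n+1))
    with hS
  have hcover : Metric.closedBall (0:EuclideanSpace ℝ (Fin d)) δ ⊆ {0} ∪ ⋃ n, S n := by
    intro x hx
    rw [Metric.mem_closedBall, dist_zero_right] at hx
    by_cases hx0 : x = 0
    · exact Or.inl (by simp [hx0])
    · right
      have hxn : 0 < ‖x‖ := norm_pos_iff.2 hx0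
      have hex : ∃ k : ℕ, δ / 2 ^ k < ‖x‖ := by
        obtain ⟨k, hk⟩ := pow_unbounded_of_one_lt (δ / ‖x‖) (by norm_num : (1:ℝ) < 2)
        exact ⟨k, by rw [div_lt_iff₀ (by positivity)]; nlinarith [div_lt_iff₀ hxn |>.1 hk]⟩
      classical
      set k := Nat.find hex with hk
      have hspec : δ / 2 ^ k < ‖x‖ := Nat.find_spec hex
      have hkpos : k ≠ 0 := by
        intro h0
        rw [h0] at hspec
        simp at hspec
        linarith
      obtain ⟨m, hm⟩ := Nat.exists_eq_succ_of_ne_zero hkpos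
      have hmin : ¬ (δ / 2 ^ m < ‖x‖) := Nat.find_min hex (by omega)
      push_neg at hmin
      refine Set.mem_iUnion.2 ⟨m, ?_⟩
      constructor
      · rw [Metric.mem_closedBall, dist_zero_right]; exact hmin
      · rw [Metric.mem_closedBall, dist_zero_right, not_le]
        rw [hm] at hspec; exact hspec
  have hb : ∀ n : ℕ, ∫⁻ x in S n, ENNReal.ofReal ‖‖x‖⁻¹‖ ∂volume ≤
      ENNReal.ofReal (2 * δ ^ (d-1)) * ENNReal.ofReal ((1:ℝ)/2) ^ n *
        volume (Metric.closedBall (0:EuclideanSpace ℝ (Fin d)) 1) := by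
    intro n
    have h1 : ∫⁻ x in S n, ENNReal.ofReal ‖‖x‖⁻¹‖ ∂volume ≤
        ∫⁻ _ in S n, ENNReal.ofReal (2^(n+1)/δ) ∂volume := by
      refine setLIntegral_mono measurable_const (fun x hx => ?_)
      have hx2 : δ/2^(n+1) < ‖x‖ := by
        have := hx.2
        rw [Metric.mem_closedBall, dist_zero_right, not_le] at this
        exact this
      have hxpos : 0 < ‖x‖ := lt_trans (by positivity) hx2
      apply ENNReal.ofReal_le_ofReal
      rw [Real.norm_eq_abs, abs_of_nonneg (by positivity)]
      rw [inv_le_comm₀ hxpos (by positivity), inv_div]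
      exact hx2.le
    refine h1.trans ?_
    rw [lintegral_const, Measure.restrict_apply MeasurableSet.univ, univ_inter]
    have hvol : volume (S n) ≤ ENNReal.ofReal ((δ/2^n)^d) * volume (Metric.closedBall (0:EuclideanSpace ℝ (Fin d)) 1) := by
      refine (measure_mono diff_subset).trans ?_
      rw [Measure.addHaar_closedBall _ _ (by positivity : (0:ℝ) ≤ δ/2^n), hE]
      exact mul_le_mul' le_rfl (measure_mono Metric.ball_subset_closedBall)
    have h1n : (1:ℝ) ≤ 2^n := one_le_pow₀ (by norm_num)
    have hq : (2:ℝ)^n/((2:ℝ)^n)^d ≤ (1/2)^n := by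
      rw [div_le_iff₀ (by positivity), one_div, inv_pow]
      calc (2:ℝ)^n = (2^n)⁻¹ * ((2^n)^2) := by
            rw [pow_two]; field_simp
        _ ≤ (2^n)⁻¹ * ((2^n)^d) := by
            exact mul_le_mul_of_nonneg_left (pow_le_pow_right₀ h1n hd) (by positivity)
        _ = ((2:ℝ)^n)⁻¹ * ((2:ℝ)^n)^d := rfl
    have key : 2^(n+1)/δ * (δ/2^n)^d ≤ 2*δ^(d-1)*(1/2)^n := by
      have e1 : 2^(n+1)/δ * (δ/2^n)^d = 2*δ^(d-1) * ((2:ℝ)^n/((2:ℝ)^n)^d) := by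
        have hδd : δ^d = δ^(d-1)*δ := by rw [← pow_succ]; congr 1; omega
        have h2 : (2:ℝ)^(n+1) = 2*2^n := by rw [pow_succ]; ring
        rw [div_pow, hδd, h2]
        field_simp
      have hq2 := mul_le_mul_of_nonneg_left hq (show (0:ℝ) ≤ δ^(d-1) by positivity)
      rw [e1, mul_assoc, mul_assoc]
      exact mul_le_mul_of_nonneg_left hq2 (by norm_num : (0:ℝ) ≤ 2)
    calc ENNReal.ofReal (2^(n+1)/δ) * volume (S n)
        ≤ ENNReal.ofReal (2^(n+1)/δ) *
          (ENNReal.ofReal ((δ/2^n)^d) * volume (Metric.closedBall (0:EuclideanSpace ℝ (Fin d)) 1)) :=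
          mul_le_mul' le_rfl hvol
      _ = ENNReal.ofReal (2^(n+1)/δ * (δ/2^n)^d) * volume (Metric.closedBall (0:EuclideanSpace ℝ (Fin d)) 1) := by
          rw [← mul_assoc, ← ENNReal.ofReal_mul (by positivity)]
      _ ≤ ENNReal.ofReal (2*δ^(d-1)*(1/2)^n) * volume (Metric.closedBall (0:EuclideanSpace ℝ (Fin d)) 1) :=
          mul_le_mul' (ENNReal.ofReal_le_ofReal key) le_rfl
      _ = ENNReal.ofReal (2*δ^(d-1)) * ENNReal.ofReal ((1:ℝ)/2) ^ n *
            volume (Metric.closedBall (0:EuclideanSpace ℝ (Fin d)) 1) := by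
          rw [ENNReal.ofReal_mul (by positivity), ENNReal.ofReal_pow (by norm_num)]
  calc ∫⁻ x in Metric.closedBall (0:EuclideanSpace ℝ (Fin d)) δ, ENNReal.ofReal ‖‖x‖⁻¹‖ ∂volume
      ≤ ∫⁻ x in ({0} ∪ ⋃ n, S n : Set (EuclideanSpace ℝ (Fin d))), ENNReal.ofReal ‖‖x‖⁻¹‖ ∂volume :=
        lintegral_mono_set hcover
    _ ≤ (∫⁻ x in ({0} : Set (EuclideanSpace ℝ (Fin d))), ENNReal.ofReal ‖‖x‖⁻¹‖ ∂volume) +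
        ∫⁻ x in (⋃ n, S n : Set (EuclideanSpace ℝ (Fin d))), ENNReal.ofReal ‖‖x‖⁻¹‖ ∂volume :=
        lintegral_union_le _ _ _
    _ ≤ 0 + ∑' n, ∫⁻ x in S n, ENNReal.ofReal ‖‖x‖⁻¹‖ ∂volume := by
        refine add_le_add (le_of_eq ?_) (lintegral_iUnion_le _ _)
        rw [Measure.restrict_singleton, measure_singleton]
        simp
    _ ≤ 0 + ∑' n, (ENNReal.ofReal (2 * δ ^ (d-1)) * ENNReal.ofReal ((1:ℝ)/2) ^ n *
          volume (Metric.closedBall (0:EuclideanSpace ℝ (Fin d)) 1)) := by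
        refine add_le_add le_rfl (ENNReal.tsum_le_tsum hb)
    _ = ENNReal.ofReal (2 * δ ^ (d-1)) * (∑' n, ENNReal.ofReal ((1:ℝ)/2) ^ n) *
          volume (Metric.closedBall (0:EuclideanSpace ℝ (Fin d)) 1) := by
        rw [zero_add, ENNReal.tsum_mul_right, ENNReal.tsum_mul_left]
    _ < ⊤ := by
        rw [ENNReal.tsum_geometric]
        refine ENNReal.mul_lt_top (ENNReal.mul_lt_top ENNReal.ofReal_lt_top ?_)
          measure_closedBall_lt_top
        rw [lt_top_iff_ne_top]
        refine ENNReal.inv_ne_top.2 ?_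
        have : ENNReal.ofReal ((1:ℝ)/2) < 1 := by
          rw [ENNReal.ofReal_lt_one]; norm_num
        exact (tsub_pos_of_lt this).ne'

lemma aux_norm_integral (d : ℕ) (hd : 2 ≤ d) (δ : ℝ) (hδ : 0 < δ) :
    ∫ x in Metric.closedBall (0:EuclideanSpace ℝ (Fin d)) δ, ‖x‖⁻¹ =
      (d : ℝ) * (volume (Metric.ball (0:EuclideanSpace ℝ (Fin d)) 1)).toReal *
        (δ ^ (d-1) / ((d:ℝ) - 1)) := by
  have hE : Module.finrank ℝ (EuclideanSpace ℝ (Fin d)) = d := by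
    simp [finrank_euclideanSpace]
  haveI : Nontrivial (EuclideanSpace ℝ (Fin d)) := by
    refine nontrivial_of_ne (EuclideanSpace.single ⟨0, by omega⟩ (1:ℝ)) 0 ?_
    intro h
    have h1 := congrArg norm h
    rw [EuclideanSpace.norm_single, norm_zero, norm_one] at h1
    exact one_ne_zero h1
  set f : ℝ → ℝ := (Icc 0 δ).indicator (fun r => r⁻¹) with hf
  have h1 : ∀ x : EuclideanSpace ℝ (Fin d),
      (Metric.closedBall (0:EuclideanSpace ℝ (Fin d)) δ).indicator (fun x => ‖x‖⁻¹) x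
        = f ‖x‖ := by
    intro x
    by_cases hx : ‖x‖ ≤ δ
    · rw [indicator_of_mem (Metric.mem_closedBall.2 (by rwa [dist_zero_right])), hf,
        indicator_of_mem (mem_Icc.2 ⟨norm_nonneg x, hx⟩)]
    · rw [indicator_of_notMem (fun hmem => hx (by rwa [Metric.mem_closedBall, dist_zero_right]
        at hmem)), hf, indicator_of_notMem (fun hmem => hx hmem.2)]
  rw [← integral_indicator Metric.isClosed_closedBall.measurableSet]
  rw [show (Metric.closedBall (0:EuclideanSpace ℝ (Fin d)) δ).indicator (fun x => ‖x‖⁻¹)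
      = fun x => f ‖x‖ from funext h1]
  rw [MeasureTheory.integral_fun_norm_addHaar volume f]
  rw [hE]
  have h2 : ∀ y : ℝ, y ^ (d-1) • f y = (Icc 0 δ).indicator (fun y => y^(d-1) * y⁻¹) y := by
    intro y
    by_cases hy : y ∈ Icc 0 δ
    · rw [hf, indicator_of_mem hy, indicator_of_mem hy, smul_eq_mul]
    · rw [hf, indicator_of_notMem hy, indicator_of_notMem hy, smul_zero]
  simp only [h2]
  rw [setIntegral_indicator measurableSet_Icc]
  rw [show Ioi (0:ℝ) ∩ Icc 0 δ = Ioc 0 δ by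
    ext y
    simp only [mem_inter_iff, mem_Ioi, mem_Icc, mem_Ioc]
    constructor
    · rintro ⟨h1, _, h3⟩; exact ⟨h1, h3⟩
    · rintro ⟨h1, h2⟩; exact ⟨h1, h1.le, h2⟩]
  rw [setIntegral_congr_fun measurableSet_Ioc (g := fun y : ℝ => y ^ (d-2))
    (fun y hy => by
      have : y ^ (d-1) = y ^ (d-2) * y := by
        rw [← pow_succ]; congr 1; omega
      rw [this, mul_assoc, mul_inv_cancel₀ (ne_of_gt hy.1), mul_one])]
  rw [← intervalIntegral.integral_of_le hδ.le, integral_pow]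
  rw [nsmul_eq_mul, smul_eq_mul]
  have h3 : (d:ℝ) - 1 = ((d-2:ℕ):ℝ) + 1 := by
    rw [Nat.cast_sub hd]; ring
  have h4 : d - 2 + 1 = d - 1 := by omega
  rw [h4, h3, zero_pow (by omega : d - 1 ≠ 0)]
  rw [measureReal_def]
  ring
lemma aux_inner_rot (d : ℕ) (hd : 2 ≤ d) (a δ : ℝ) (ha : 0 < a) (hδ : 0 < δ)
    (x : EuclideanSpace ℝ (Fin d)) (hx : x ≠ 0) :
    (∫ y in Metric.closedBall (0:EuclideanSpace ℝ (Fin d)) δ,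
        1 / ((inner ℝ x y : ℝ) ^ 2 + a ^ 2))
      = ∫ y in Metric.closedBall (0:EuclideanSpace ℝ (Fin d)) δ,
          1 / ((‖x‖ * y ⟨0, by omega⟩) ^ 2 + a ^ 2) := by
  set i0 : Fin d := ⟨0, by omega⟩
  have hb : 0 < ‖x‖ := norm_pos_iff.2 hx
  set u : EuclideanSpace ℝ (Fin d) := ‖x‖⁻¹ • x with hu
  have hun : ‖u‖ = 1 := norm_smul_inv_norm hx
  set v : EuclideanSpace ℝ (Fin d) := EuclideanSpace.single i0 (1:ℝ) with hv
  have hvn : ‖v‖ = 1 := by rw [hv, EuclideanSpace.norm_single, norm_one]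
  set R := Submodule.reflection (ℝ ∙ (u - v))ᗮ with hR
  have hRu : R u = v := Submodule.reflection_sub (hun.trans hvn.symm)
  have hinner : ∀ z : EuclideanSpace ℝ (Fin d), (inner ℝ x (R z) : ℝ) = ‖x‖ * z i0 := by
    intro z
    have hxu : x = ‖x‖ • u := by rw [hu, smul_smul, mul_inv_cancel₀ hb.ne', one_smul]
    calc (inner ℝ x (R z) : ℝ) = ‖x‖ * (inner ℝ u (R z) : ℝ) := by
          conv_lhs => rw [hxu]
          rw [real_inner_smul_left]
      _ = ‖x‖ * (inner ℝ (R u) (R (R z)) : ℝ) := by rw [LinearIsometryEquiv.inner_map_map]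
      _ = ‖x‖ * (inner ℝ v z : ℝ) := by rw [hRu, Submodule.reflection_reflection]
      _ = ‖x‖ * z i0 := by rw [hv, EuclideanSpace.inner_single_left]; simp
  have hmp : MeasurePreserving R volume volume :=
    R.measurePreserving
  have hemb : MeasurableEmbedding R := R.toHomeomorph.measurableEmbedding
  have hpre : R ⁻¹' (Metric.closedBall (0:EuclideanSpace ℝ (Fin d)) δ)
      = Metric.closedBall (0:EuclideanSpace ℝ (Fin d)) δ := by
    ext z
    simp only [mem_preimage, Metric.mem_closedBall, dist_zero_right]
    rw [R.norm_map]
  have key := hmp.setIntegral_preimage_emb hemb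
    (fun y => 1 / ((inner ℝ x y : ℝ) ^ 2 + a ^ 2))
    (Metric.closedBall (0:EuclideanSpace ℝ (Fin d)) δ)
  rw [hpre] at key
  rw [← key]
  refine setIntegral_congr_fun Metric.isClosed_closedBall.measurableSet (fun z _ => ?_)
  rw [hinner z]

lemma aux_inner (d : ℕ) (hd : 2 ≤ d) (a δ : ℝ) (ha : 0 < a) (hδ : 0 < δ)
    (x : EuclideanSpace ℝ (Fin d)) (hx : x ≠ 0) :
    (∫ y in Metric.closedBall (0:EuclideanSpace ℝ (Fin d)) δ,
        1 / ((inner ℝ x y : ℝ) ^ 2 + a ^ 2))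
      ≤ π / (a * ‖x‖) * (2*δ) ^ (d-1) := by
  rw [aux_inner_rot d hd a δ ha hδ x hx]
  set i0 : Fin d := ⟨0, by omega⟩ with hi0
  set F : ℝ → ℝ := fun t => 1 / ((‖x‖ * t)^2 + a^2) with hF
  have hb : 0 < ‖x‖ := norm_pos_iff.2 hx
  have hFc : Continuous F := by
    rw [hF]
    refine continuous_const.div (by continuity) (fun t => by positivity)
  have hmp := (EuclideanSpace.volume_preserving_symm_measurableEquiv_toLp (Fin d)).symm
  have hemb := (MeasurableEquiv.toLp 2 (Fin d → ℝ)).measurableEmbedding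
  have key := hmp.setIntegral_preimage_emb hemb
    (fun y : EuclideanSpace ℝ (Fin d) => F (y i0))
    (Metric.closedBall (0:EuclideanSpace ℝ (Fin d)) δ)
  rw [← key]
  have hsub : (MeasurableEquiv.toLp 2 (Fin d → ℝ)) ⁻¹'
      (Metric.closedBall (0:EuclideanSpace ℝ (Fin d)) δ)
      ⊆ Set.pi univ (fun _ : Fin d => Icc (-δ) δ) := by
    intro z hz
    rw [mem_preimage, Metric.mem_closedBall, dist_zero_right] at hz
    intro i _
    have h1 : |z i| ≤ ‖(MeasurableEquiv.toLp 2 (Fin d → ℝ)) z‖ := by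
      rw [EuclideanSpace.norm_eq]
      rw [show |z i| = Real.sqrt (|z i|^2) from by rw [Real.sqrt_sq (abs_nonneg _)]]
      apply Real.sqrt_le_sqrt
      have : |z i| ^ 2 = ‖((MeasurableEquiv.toLp 2 (Fin d → ℝ)) z) i‖ ^ 2 := by
        rw [Real.norm_eq_abs]; rfl
      rw [this]
      exact Finset.single_le_sum (f := fun j =>
        ‖((MeasurableEquiv.toLp 2 (Fin d → ℝ)) z) j‖ ^ 2)
        (fun j _ => by positivity) (Finset.mem_univ i)
    exact abs_le.1 (h1.trans hz)
  calc ∫ z in (MeasurableEquiv.toLp 2 (Fin d → ℝ)) ⁻¹'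
        (Metric.closedBall (0:EuclideanSpace ℝ (Fin d)) δ),
        F (((MeasurableEquiv.toLp 2 (Fin d → ℝ)) z) i0)
      ≤ ∫ z in Set.pi univ (fun _ : Fin d => Icc (-δ) δ), F (z i0) := by
        refine setIntegral_mono_set (aux_box_integrable i0 F δ hFc)
          (Filter.Eventually.of_forall (fun z => by rw [hF]; positivity))
          (HasSubset.Subset.eventuallyLE hsub)
    _ = (∫ t in Icc (-δ) δ, F t) * ((volume (Icc (-δ) δ)).toReal) ^ (d - 1) :=
        aux_box d i0 F δ
    _ ≤ π / (a * ‖x‖) * (2*δ) ^ (d-1) := by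
        have hvol : (volume (Icc (-δ) δ)).toReal = 2*δ := by
          rw [Real.volume_Icc, ENNReal.toReal_ofReal (by linarith)]
          ring
        rw [hvol]
        refine mul_le_mul_of_nonneg_right ?_ (by positivity)
        exact aux_one_dim a ‖x‖ δ ha hb


/-- For `d ≥ 2`, `C > 0`, there is a constant `C'` depending only on `d` and `C`
such that for all `ν ∈ (0,1]` and `0 < δ ≤ 1`,
`∫_{|x|≤δ} ∫_{|y|≤δ} dx dy / ((x·y)² + (Cν)²) ≤ C' δ^{2d-2} / ν`. -/
theorem near_singularity_bound (d : ℕ) (hd : 2 ≤ d) (C : ℝ) (hC : 0 < C) :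
    ∃ C' > (0:ℝ), ∀ ν : ℝ, ν ∈ Set.Ioc (0:ℝ) 1 → ∀ δ : ℝ, 0 < δ → δ ≤ 1 →
      (∫ x in Metric.closedBall (0 : EuclideanSpace ℝ (Fin d)) δ,
        ∫ y in Metric.closedBall (0 : EuclideanSpace ℝ (Fin d)) δ,
          1 / ((inner ℝ x y : ℝ) ^ 2 + (C * ν) ^ 2))
        ≤ C' * δ ^ (2 * d - 2) / ν := by
  have hd2 : (2:ℝ) ≤ (d:ℝ) := by exact_mod_cast hd
  have hd1 : (0:ℝ) < (d:ℝ) - 1 := by linarith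
  set V := (volume (Metric.ball (0:EuclideanSpace ℝ (Fin d)) 1)).toReal with hV
  have hV0 : 0 < V := by
    rw [hV]
    refine ENNReal.toReal_pos (ne_of_gt (Metric.measure_ball_pos _ _ one_pos))
      measure_ball_lt_top.ne
  refine ⟨π / C * 2 ^ (d-1) * ((d:ℝ) * V / ((d:ℝ)-1)), ?_, ?_⟩
  · have h1 : (0:ℝ) < π / C := div_pos pi_pos hC
    have h2 : (0:ℝ) < (d:ℝ) * V / ((d:ℝ)-1) := div_pos (mul_pos (by linarith) hV0) hd1
    positivity
  intro ν hν δ hδ hδ1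
  obtain ⟨hν0, hν1⟩ := hν
  have ha : 0 < C * ν := mul_pos hC hν0
  haveI : Nontrivial (EuclideanSpace ℝ (Fin d)) := by
    refine nontrivial_of_ne (EuclideanSpace.single ⟨0, by omega⟩ (1:ℝ)) 0 ?_
    intro h
    have h1 := congrArg norm h
    rw [EuclideanSpace.norm_single, norm_zero, norm_one] at h1
    exact one_ne_zero h1
  set g : EuclideanSpace ℝ (Fin d) → ℝ :=
    fun x => π / (C * ν) * (2*δ) ^ (d-1) * ‖x‖⁻¹ with hg
  have hg_int : IntegrableOn g (Metric.closedBall (0:EuclideanSpace ℝ (Fin d)) δ) :=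
    (aux_inv_norm_integrable d hd δ hδ).const_mul _
  have h0 : ∀ᵐ x : EuclideanSpace ℝ (Fin d) ∂volume, x ≠ 0 := by
    have hset : {x : EuclideanSpace ℝ (Fin d) | ¬ x ≠ 0} = {0} := by ext x; simp
    rw [ae_iff, hset]
    exact measure_singleton 0
  have hae : ∀ᵐ x ∂(volume.restrict (Metric.closedBall (0:EuclideanSpace ℝ (Fin d)) δ)),
      (∫ y in Metric.closedBall (0 : EuclideanSpace ℝ (Fin d)) δ,
        1 / ((inner ℝ x y : ℝ) ^ 2 + (C * ν) ^ 2)) ≤ g x := by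
    refine ae_restrict_of_ae (h0.mono fun x hx0 => ?_)
    refine (aux_inner d hd (C*ν) δ ha hδ x hx0).trans (le_of_eq ?_)
    have hxn : ‖x‖ ≠ 0 := norm_ne_zero_iff.2 hx0
    rw [hg]
    field_simp
  have hnn : 0 ≤ᵐ[(volume.restrict (Metric.closedBall (0:EuclideanSpace ℝ (Fin d)) δ))]
      fun x => (∫ y in Metric.closedBall (0 : EuclideanSpace ℝ (Fin d)) δ,
        1 / ((inner ℝ x y : ℝ) ^ 2 + (C * ν) ^ 2)) :=
    Filter.Eventually.of_forall fun x => integral_nonneg fun y => by positivity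
  refine (integral_mono_of_nonneg hnn hg_int hae).trans ?_
  have hgval : ∫ x in Metric.closedBall (0:EuclideanSpace ℝ (Fin d)) δ, g x =
      π / (C * ν) * (2*δ) ^ (d-1) * ((d:ℝ) * V * (δ ^ (d-1) / ((d:ℝ) - 1))) := by
    rw [hg, MeasureTheory.integral_const_mul, aux_norm_integral d hd δ hδ]
  rw [hgval]
  refine le_of_eq ?_
  have hexp : δ^(d-1) * δ^(d-1) = δ^(2*d-2) := by
    rw [← pow_add]; congr 1; omega
  rw [mul_pow, ← hexp]
  field_simp
end

section
/- Let ξ ∈ Σ* and |θ| < θ₀ with θ₀ small enough. Then the distance from π(ξ,θ) = ξ + θN(ξ) to the quadric Σ = {x·y = 0} equals |ξ||θ|, and the nearest point of Σ to π(ξ,θ) is ξ. -/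
open MeasureTheory Real Set

noncomputable section

open scoped RealInnerProductSpace

abbrev Z (d : ℕ) := EuclideanSpace ℝ (Fin d ⊕ Fin d)

def om {d : ℕ} (z : Z d) : ℝ := ∑ i : Fin d, z (Sum.inl i) * z (Sum.inr i)

def Nvec {d : ℕ} (z : Z d) : Z d := WithLp.toLp 2 (fun i : Fin d ⊕ Fin d => z i.swap)

def piMap {d : ℕ} (ξ : Z d) (θ : ℝ) : Z d := ξ + θ • Nvec ξ

lemma om_add {d : ℕ} (z w : Z d) :
    om (z + w) = om z + om w + ⟪Nvec z, w⟫ := by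
  simp only [om, Nvec, PiLp.inner_apply, RCLike.inner_apply, starRingEnd_apply, star_trivial,
    Fintype.sum_sum_type, Sum.swap_inl, Sum.swap_inr, PiLp.add_apply, add_mul, mul_add,
    Finset.sum_add_distrib]
  rw [show (∑ x : Fin d, w (Sum.inr x) * z (Sum.inl x))
      = ∑ x : Fin d, z (Sum.inl x) * w (Sum.inr x) from
    Finset.sum_congr rfl fun i _ => mul_comm _ _]
  ring

lemma norm_Nvec {d : ℕ} (z : Z d) : ‖Nvec z‖ = ‖z‖ := by
  have h : ⟪Nvec z, Nvec z⟫ = ⟪z, z⟫ := by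
    simp only [Nvec, PiLp.inner_apply, RCLike.inner_apply, starRingEnd_apply, star_trivial,
      Fintype.sum_sum_type, Sum.swap_inl, Sum.swap_inr]
    ring
  rw [real_inner_self_eq_norm_sq, real_inner_self_eq_norm_sq] at h
  have := norm_nonneg (Nvec z)
  have := norm_nonneg z
  nlinarith

lemma om_abs_le {d : ℕ} (u : Z d) : 2 * |om u| ≤ ‖u‖ ^ 2 := by
  have hn : ‖u‖ ^ 2 = ∑ i : Fin d, (u (Sum.inl i) * u (Sum.inl i)
      + u (Sum.inr i) * u (Sum.inr i)) := by
    rw [← real_inner_self_eq_norm_sq]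
    simp only [PiLp.inner_apply, RCLike.inner_apply, starRingEnd_apply, star_trivial,
      Fintype.sum_sum_type, Finset.sum_add_distrib]
  have h1 : 2 * om u ≤ ‖u‖ ^ 2 := by
    rw [hn, om, Finset.mul_sum]
    exact Finset.sum_le_sum fun i _ => by nlinarith [sq_nonneg (u (Sum.inl i) - u (Sum.inr i))]
  have h2 : -(2 * om u) ≤ ‖u‖ ^ 2 := by
    rw [hn, om, Finset.mul_sum, ← Finset.sum_neg_distrib]
    exact Finset.sum_le_sum fun i _ => by nlinarith [sq_nonneg (u (Sum.inl i) + u (Sum.inr i))]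
  rcases abs_cases (om u) with ⟨h, _⟩ | ⟨h, _⟩ <;> rw [h] <;> linarith

/-- there is `θ₀ > 0` such that for `ξ ∈ Σ*` and `|θ| < θ₀`, the distance from
`π(ξ,θ) = ξ + θN(ξ)` to the quadric `Σ = {x·y = 0}` equals `|ξ||θ|`, it is attained at `ξ`,
and `ξ` is the unique nearest point of `Σ`. -/
theorem dist_to_quadric (d : ℕ) (hd : 2 ≤ d) :
    ∃ θ₀ > (0:ℝ), ∀ ξ : Z d, om ξ = 0 → ξ ≠ 0 → ∀ θ : ℝ, |θ| < θ₀ →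
      Metric.infDist (piMap ξ θ) {z : Z d | om z = 0} = ‖ξ‖ * |θ| ∧
      dist (piMap ξ θ) ξ = ‖ξ‖ * |θ| ∧
      ∀ ζ ∈ {z : Z d | om z = 0}, dist (piMap ξ θ) ζ = ‖ξ‖ * |θ| → ζ = ξ := by
  refine ⟨1, one_pos, fun ξ hξ hξ0 θ hθ => ?_⟩
  have hNξ : ‖θ • Nvec ξ‖ = ‖ξ‖ * |θ| := by
    rw [norm_smul, norm_Nvec, Real.norm_eq_abs, mul_comm]
  have hdist_ξ : dist (piMap ξ θ) ξ = ‖ξ‖ * |θ| := by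
    rw [dist_eq_norm, piMap, add_sub_cancel_left, hNξ]
  -- key identity: squared distance to any point of the quadric
  have key : ∀ ζ : Z d, om ζ = 0 →
      dist (piMap ξ θ) ζ ^ 2
        = ‖ξ‖ ^ 2 * θ ^ 2 + ‖ζ - ξ‖ ^ 2 + 2 * θ * om (ζ - ξ) := by
    intro ζ hζ
    have hζξ : ζ = ξ + (ζ - ξ) := by abel
    have hNu : ⟪Nvec ξ, ζ - ξ⟫ = - om (ζ - ξ) := by
      have h := om_add ξ (ζ - ξ)
      rw [← hζξ, hζ, hξ] at h
      linarith
    have hsub : piMap ξ θ - ζ = θ • Nvec ξ - (ζ - ξ) := by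
      rw [piMap]; abel
    rw [dist_eq_norm, hsub, norm_sub_sq_real, real_inner_smul_left, hNu, hNξ,
      mul_pow, sq_abs]
    ring
  -- lower bound for the distance to any point of the quadric
  have hlb : ∀ ζ : Z d, om ζ = 0 → ‖ξ‖ * |θ| ≤ dist (piMap ξ θ) ζ := by
    intro ζ hζ
    have hk := key ζ hζ
    have h2 := om_abs_le (ζ - ξ)
    have hq : (‖ξ‖ * |θ|) ^ 2 ≤ dist (piMap ξ θ) ζ ^ 2 := by
      rw [hk, mul_pow, sq_abs]
      nlinarith [neg_abs_le (θ * om (ζ - ξ)), abs_mul θ (om (ζ - ξ)), hθ.le,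
        mul_nonneg (abs_nonneg θ) (show (0:ℝ) ≤ ‖ζ - ξ‖ ^ 2 - 2 * |om (ζ - ξ)| by linarith)]
    nlinarith [dist_nonneg (x := piMap ξ θ) (y := ζ),
      mul_nonneg (norm_nonneg ξ) (abs_nonneg θ)]
  have hmem : ξ ∈ {z : Z d | om z = 0} := hξ
  refine ⟨le_antisymm ((Metric.infDist_le_dist_of_mem hmem).trans_eq hdist_ξ) ?_, hdist_ξ, ?_⟩
  · rw [Metric.infDist_eq_iInf]
    haveI : Nonempty {z : Z d | om z = 0} := ⟨⟨ξ, hξ⟩⟩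
    exact le_ciInf fun ζ => hlb ζ ζ.2
  · intro ζ hζ hdζ
    have hk := key ζ hζ
    rw [hdζ, mul_pow, sq_abs] at hk
    have h2 := om_abs_le (ζ - ξ)
    have hu2 : ‖ζ - ξ‖ ^ 2 ≤ 0 := by
      nlinarith [neg_abs_le (θ * om (ζ - ξ)), abs_mul θ (om (ζ - ξ)), hθ,
        mul_nonneg (abs_nonneg θ) (show (0:ℝ) ≤ ‖ζ - ξ‖ ^ 2 - 2 * |om (ζ - ξ)| by linarith)]
    have hu0 : ‖ζ - ξ‖ = 0 := by nlinarith [norm_nonneg (ζ - ξ)]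
    exact sub_eq_zero.mp (norm_eq_zero.mp hu0)
end
end
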